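/- Let t be a normal λμ-term, σ = [(a_i:=*y)_{1≤i≤n}] for a λ-variable y, and τ the normal form of tσ. Then tσ reduces to τ using only y-redexes, i.e. only β-redexes of the form (λz.u y) and μ-redexes of the form (μb.u y). -/
import Mathlib


/-- λμ-terms: λ-variables, λ-abstraction, application, μ-abstraction, naming (a t). -/
inductive Trm : Type
  | var  : ℕ → Trm
  | lam  : ℕ → Trm → Trm
  | app  : Trm → Trm → Trm
  | mu   : ℕ → Trm → Trm
  | name : ℕ → Trm → Trm
deriving DecidableEq

/-- substitution of a λ-variable: t[x:=v] (respecting shadowing). -/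
def subst (x : ℕ) (v : Trm) : Trm → Trm
  | .var y => if y = x then v else .var y
  | .lam y t => .lam y (if y = x then t else subst x v t)
  | .app t u => .app (subst x v t) (subst x v u)
  | .mu b t => .mu b (subst x v t)
  | .name b t => .name b (subst x v t)

/-- μ-substitution t[a:=*v]: replace inductively each subterm (a w) by (a (w v)). -/
def msubst (a : ℕ) (v : Trm) : Trm → Trm
  | .var y => .var y
  | .lam y t => .lam y (msubst a v t)
  | .app t u => .app (msubst a v t) (msubst a v u)
  | .mu b t => .mu b (if b = a then t else msubst a v t)
  | .name b t =>
      if b = a then .name b (.app (msubst a v t) v) else .name b (msubst a v t)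

/-- One-step β and μ reduction, closed under all contexts. -/
inductive Red : Trm → Trm → Prop
  | beta (x : ℕ) (u v : Trm) : Red (.app (.lam x u) v) (subst x v u)
  | muR  (a : ℕ) (u v : Trm) : Red (.app (.mu a u) v) (.mu a (msubst a v u))
  | appL {t t'} (u : Trm) : Red t t' → Red (.app t u) (.app t' u)
  | appR (t : Trm) {u u'} : Red u u' → Red (.app t u) (.app t u')
  | lamC (x : ℕ) {t t'} : Red t t' → Red (.lam x t) (.lam x t')
  | muC  (a : ℕ) {t t'} : Red t t' → Red (.mu a t) (.mu a t')
  | nameC (a : ℕ) {t t'} : Red t t' → Red (.name a t) (.name a t')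

/-- Reflexive transitive closure of one-step reduction. -/
def Reds : Trm → Trm → Prop := Relation.ReflTransGen Red
/-- A normal term: no β or μ redex. -/
def NormalForm (t : Trm) : Prop := ∀ u, ¬ Red t u

/-- A normalizable term: it reduces to a normal form. -/
def Normalizable (t : Trm) : Prop := ∃ n, Reds t n ∧ NormalForm n
/-- One-step reduction contracting only a redex whose argument is the
λ-variable y: a β-redex (λz.u y) or a μ-redex (μb.u y). -/
inductive RedY (y : ℕ) : Trm → Trm → Prop
  | beta (x : ℕ) (u : Trm) : RedY y (.app (.lam x u) (.var y)) (subst x (.var y) u)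
  | muR  (a : ℕ) (u : Trm) : RedY y (.app (.mu a u) (.var y)) (.mu a (msubst a (.var y) u))
  | appL {t t'} (u : Trm) : RedY y t t' → RedY y (.app t u) (.app t' u)
  | appR (t : Trm) {u u'} : RedY y u u' → RedY y (.app t u) (.app t u')
  | lamC (x : ℕ) {t t'} : RedY y t t' → RedY y (.lam x t) (.lam x t')
  | muC  (a : ℕ) {t t'} : RedY y t t' → RedY y (.mu a t) (.mu a t')
  | nameC (a : ℕ) {t t'} : RedY y t t' → RedY y (.name a t) (.name a t')

/-- The substitution [(aᵢ:=*y)] over a finite set of μ-variables: each subterm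
(a u) with a ∈ as is replaced by (a (u y)). -/
def msubstS (as : Finset ℕ) (y : ℕ) : Trm → Trm
  | .var z => .var z
  | .lam z t => .lam z (msubstS as y t)
  | .app t u => .app (msubstS as y t) (msubstS as y u)
  | .mu b t => .mu b (msubstS (as.erase b) y t)
  | .name b t =>
      if b ∈ as then .name b (.app (msubstS as y t) (.var y))
      else .name b (msubstS as y t)

mutual
/-- Terms whose head is a variable (or a naming): can never become λ/μ. -/
inductive Neutral (y : ℕ) : Trm → Prop
  | var (x) : Neutral y (.var x)
  | app {f g} : Neutral y f → Good y g → Neutral y (.app f g)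
  | name (a) {t} : Good y t → Neutral y (.name a t)
/-- Every application is either neutral-headed or has argument `var y`. -/
inductive Good (y : ℕ) : Trm → Prop
  | neu {t} : Neutral y t → Good y t
  | lam (x) {t} : Good y t → Good y (.lam x t)
  | mu (a) {t} : Good y t → Good y (.mu a t)
  | name (a) {t} : Good y t → Good y (.name a t)
  | appY {f} : Good y f → Good y (.app f (.var y))
end

lemma good_app {y f g} (h : Good y (.app f g)) : Good y f ∧ Good y g := by
  cases h with
  | neu h => cases h with | app hf hg => exact ⟨.neu hf, hg⟩
  | appY hf => exact ⟨hf, .neu (.var y)⟩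

lemma good_lam {y x t} (h : Good y (.lam x t)) : Good y t := by
  cases h with
  | neu h => cases h
  | lam _ h => exact h

lemma good_mu {y a t} (h : Good y (.mu a t)) : Good y t := by
  cases h with
  | neu h => cases h
  | mu _ h => exact h

lemma good_name {y a t} (h : Good y (.name a t)) : Good y t := by
  cases h with
  | neu h => cases h with | name _ h => exact h
  | name _ h => exact h

lemma subst_good {y x : ℕ} : ∀ t : Trm,
    (Good y t → Good y (subst x (.var y) t)) ∧
    (Neutral y t → Neutral y (subst x (.var y) t)) := by
  intro t
  induction t with
  | var z =>
    constructor <;> intro _ <;> simp only [subst] <;> split <;>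
      first | exact .neu (.var _) | exact .var _
  | lam z t ih =>
    refine ⟨fun h => ?_, fun h => by cases h⟩
    simp only [subst]; split
    · exact .lam _ (good_lam h)
    · exact .lam _ (ih.1 (good_lam h))
  | app f g ihf ihg =>
    constructor
    · intro h
      cases h with
      | neu h =>
        cases h with
        | app hf hg => exact .neu (.app (ihf.2 hf) (ihg.1 hg))
      | appY hf =>
        simpa only [subst, ite_self] using Good.appY (ihf.1 hf)
    · intro h
      cases h with
      | app hf hg => exact .app (ihf.2 hf) (ihg.1 hg)
  | mu a t ih =>
    exact ⟨fun h => .mu _ (ih.1 (good_mu h)), fun h => by cases h⟩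
  | name a t ih =>
    exact ⟨fun h => .name _ (ih.1 (good_name h)),
      fun h => by cases h with | name _ h => exact .name _ (ih.1 h)⟩

lemma msubst_good {y a : ℕ} : ∀ t : Trm,
    (Good y t → Good y (msubst a (.var y) t)) ∧
    (Neutral y t → Neutral y (msubst a (.var y) t)) := by
  intro t
  induction t with
  | var z => exact ⟨fun _ => .neu (.var _), fun _ => .var _⟩
  | lam z t ih =>
    exact ⟨fun h => .lam _ (ih.1 (good_lam h)), fun h => by cases h⟩
  | app f g ihf ihg =>
    constructor
    · intro h
      cases h with
      | neu h =>
        cases h with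
        | app hf hg => exact .neu (.app (ihf.2 hf) (ihg.1 hg))
      | appY hf => exact Good.appY (ihf.1 hf)
    · intro h
      cases h with
      | app hf hg => exact .app (ihf.2 hf) (ihg.1 hg)
  | mu b t ih =>
    refine ⟨fun h => ?_, fun h => by cases h⟩
    simp only [msubst]; split
    · exact .mu _ (good_mu h)
    · exact .mu _ (ih.1 (good_mu h))
  | name b t ih =>
    constructor
    · intro h
      simp only [msubst]; split
      · exact .name _ (.appY (ih.1 (good_name h)))
      · exact .name _ (ih.1 (good_name h))
    · intro h
      cases h with
      | name _ h =>
        simp only [msubst]; split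
        · exact .name _ (.appY (ih.1 h))
        · exact .name _ (ih.1 h)

lemma red_good {y : ℕ} {t t' : Trm} (h : Red t t') :
    (Good y t → Good y t') ∧ (Neutral y t → Neutral y t') := by
  induction h with
  | beta x u v =>
    constructor
    · intro h
      have hg := (good_app h).2
      have hu := good_lam (good_app h).1
      cases h with
      | neu h => cases h with | app hf _ => cases hf
      | appY _ => exact (subst_good u).1 hu
    · intro h; cases h with | app hf _ => cases hf
  | muR a u v =>
    constructor
    · intro h
      have hu := good_mu (good_app h).1
      cases h with
      | neu h => cases h with | app hf _ => cases hf
      | appY _ => exact .mu _ ((msubst_good u).1 hu)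
    · intro h; cases h with | app hf _ => cases hf
  | appL u hr ih =>
    constructor
    · intro h
      cases h with
      | neu h => cases h with | app hf hg => exact .neu (.app (ih.2 hf) hg)
      | appY hf => exact .appY (ih.1 hf)
    · intro h
      cases h with | app hf hg => exact .app (ih.2 hf) hg
  | appR t hr ih =>
    constructor
    · intro h
      cases h with
      | neu h => cases h with | app hf hg => exact .neu (.app hf (ih.1 hg))
      | appY hf => cases hr
    · intro h
      cases h with | app hf hg => exact .app hf (ih.1 hg)
  | lamC x hr ih =>
    exact ⟨fun h => .lam _ (ih.1 (good_lam h)), fun h => by cases h⟩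
  | muC a hr ih =>
    exact ⟨fun h => .mu _ (ih.1 (good_mu h)), fun h => by cases h⟩
  | nameC a hr ih =>
    exact ⟨fun h => .name _ (ih.1 (good_name h)),
      fun h => by cases h with | name _ h => exact .name _ (ih.1 h)⟩

lemma red_redY {y : ℕ} {t t' : Trm} (h : Red t t') (hg : Good y t) :
    RedY y t t' := by
  induction h with
  | beta x u v =>
    cases hg with
    | neu h => cases h with | app hf _ => cases hf
    | appY _ => exact .beta x u
  | muR a u v =>
    cases hg with
    | neu h => cases h with | app hf _ => cases hf
    | appY _ => exact .muR a u
  | appL u hr ih => exact .appL u (ih (good_app hg).1)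
  | appR t hr ih => exact .appR t (ih (good_app hg).2)
  | lamC x hr ih => exact .lamC x (ih (good_lam hg))
  | muC a hr ih => exact .muC a (ih (good_mu hg))
  | nameC a hr ih => exact .nameC a (ih (good_name hg))

lemma nf_app_left {t u : Trm} (h : NormalForm (.app t u)) : NormalForm t :=
  fun v hv => h _ (Red.appL u hv)
lemma nf_app_right {t u : Trm} (h : NormalForm (.app t u)) : NormalForm u :=
  fun v hv => h _ (Red.appR t hv)
lemma nf_lam {x : ℕ} {t : Trm} (h : NormalForm (.lam x t)) : NormalForm t :=
  fun v hv => h _ (Red.lamC x hv)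
lemma nf_mu {a : ℕ} {t : Trm} (h : NormalForm (.mu a t)) : NormalForm t :=
  fun v hv => h _ (Red.muC a hv)
lemma nf_name {a : ℕ} {t : Trm} (h : NormalForm (.name a t)) : NormalForm t :=
  fun v hv => h _ (Red.nameC a hv)

lemma msubstS_good {y : ℕ} : ∀ (t : Trm) (as : Finset ℕ), NormalForm t →
    Good y (msubstS as y t) ∧
    ((∀ x u, t ≠ .lam x u) → (∀ a u, t ≠ .mu a u) →
      Neutral y (msubstS as y t)) := by
  intro t
  induction t with
  | var z => exact fun as _ => ⟨.neu (.var _), fun _ _ => .var _⟩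
  | lam z t ih =>
    intro as h
    exact ⟨.lam _ (ih as (nf_lam h)).1, fun h' _ => absurd rfl (h' z t)⟩
  | app f g ihf ihg =>
    intro as h
    have hfn : Neutral y (msubstS as y f) := by
      refine (ihf as (nf_app_left h)).2 ?_ ?_
      · rintro x u rfl; exact h _ (Red.beta x u g)
      · rintro a u rfl; exact h _ (Red.muR a u g)
    have hg := (ihg as (nf_app_right h)).1
    exact ⟨.neu (.app hfn hg), fun _ _ => .app hfn hg⟩
  | mu b t ih =>
    intro as h
    exact ⟨.mu _ (ih _ (nf_mu h)).1, fun _ h' => absurd rfl (h' b t)⟩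
  | name b t ih =>
    intro as h
    have hg := (ih as (nf_name h)).1
    have : Neutral y (msubstS as y (.name b t)) := by
      simp only [msubstS]; split
      · exact .name _ (.appY hg)
      · exact .name _ hg
    exact ⟨.neu this, fun _ _ => this⟩

lemma reds_redsY {y : ℕ} {s τ : Trm} (h : Reds s τ) (hg : Good y s) :
    Relation.ReflTransGen (RedY y) s τ := by
  induction h using Relation.ReflTransGen.head_induction_on with
  | refl => exact .refl
  | head hstep _ ih =>
    exact .head (red_redY hstep hg) (ih ((red_good hstep).1 hg))

/-- If t is normal and τ is the normal form of tσ with σ = [(aᵢ:=*y)], then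
tσ reduces to τ using only y-redexes. -/
theorem msubstS_reds_y (t τ : Trm) (y : ℕ) (as : Finset ℕ)
    (ht : NormalForm t) (hτ : NormalForm τ) (hred : Reds (msubstS as y t) τ) :
    Relation.ReflTransGen (RedY y) (msubstS as y t) τ := reds_redsY hred (msubstS_good t as ht).1
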